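/- arXiv:1612.07578 — 3 statements merged into one kernel-verified Lean document; each statement's English description precedes it below -/
import Mathlib

section
/- Let Q be a polynomial of degree m ≥ 1 with real coefficients q_k and q_m > 0, and suppose β > 0 satisfies 2πn = ∫₀^{β} Q'(x)√(x/(β−x)) dx. Then 8n = 2 q_1 β + 4 ∑_{k=2}^{m} k (2k choose k) q_k (β/4)^k. -/
open Real

open MeasureTheory intervalIntegral


lemma gamma_half (k : ℕ) :
    Real.Gamma ((k : ℝ) + 1 / 2) =
      Real.sqrt π * (Nat.factorial (2 * k) : ℝ) / (4 ^ k * (Nat.factorial k : ℝ)) := by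
  induction k with
  | zero => simpa using Real.Gamma_one_half_eq
  | succ k ih =>
    have h : ((k : ℝ) + 1) + 1 / 2 = ((k : ℝ) + 1 / 2) + 1 := by ring
    have hne : (0:ℝ) < (k : ℝ) + 1 / 2 := by positivity
    rw [Nat.cast_succ, h, Real.Gamma_add_one hne.ne', ih]
    have h1 : Nat.factorial (2 * (k + 1)) =
        (2 * k + 2) * ((2 * k + 1) * Nat.factorial (2 * k)) := by
      rw [show 2 * (k + 1) = (2 * k + 1) + 1 by ring, Nat.factorial_succ, Nat.factorial_succ]
    have h2 : Nat.factorial (k + 1) = (k + 1) * Nat.factorial k := Nat.factorial_succ k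
    rw [h1, h2]
    have hF : (Nat.factorial k : ℝ) ≠ 0 := Nat.cast_ne_zero.mpr (Nat.factorial_ne_zero k)
    have h4 : ((4:ℝ)) ^ k ≠ 0 := by positivity
    push_cast
    field_simp
    ring


lemma key_eq (k : ℕ) (hk : 1 ≤ k) (x : ℝ) (hx : x ∈ Set.uIcc (0:ℝ) 1) :
    (x:ℂ) ^ (((k:ℂ) + 1/2) - 1) * ((1:ℂ) - x) ^ ((1/2:ℂ) - 1) =
      ((x ^ (k-1) * Real.sqrt (x / (1 - x)) : ℝ) : ℂ) := by
  rw [Set.uIcc_of_le zero_le_one] at hx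
  obtain ⟨h0, h1⟩ := hx
  have hkre : ((k:ℂ) + 1/2 - 1) ≠ 0 := by
    intro h
    have := congrArg Complex.re h
    simp [Complex.add_re, Complex.sub_re] at this
    have hk1 : (1:ℝ) ≤ (k:ℝ) := by exact_mod_cast hk
    linarith
  rcases h0.eq_or_lt with rfl | h0'
  · rw [show ((0:ℝ):ℂ) = (0:ℂ) by norm_num, Complex.zero_cpow hkre]
    simp
  rcases h1.lt_or_eq with h1' | rfl
  · have hx1 : (0:ℝ) < 1 - x := by linarith
    rw [show ((k:ℂ) + 1/2) - 1 = (((k:ℝ) - 1/2 : ℝ) : ℂ) by push_cast; ring,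
      show ((1/2:ℂ)) - 1 = ((-(1/2) : ℝ) : ℂ) by norm_num,
      show ((1:ℂ) - (x:ℂ)) = ((1 - x : ℝ) : ℂ) by push_cast; ring,
      ← Complex.ofReal_cpow h0'.le, ← Complex.ofReal_cpow hx1.le, ← Complex.ofReal_mul]
    congr 1
    rw [Real.sqrt_div h0'.le, Real.sqrt_eq_rpow, Real.sqrt_eq_rpow,
      show ((k:ℝ) - 1/2) = ((k - 1 : ℕ) : ℝ) + 1/2 by rw [Nat.cast_sub hk]; push_cast; ring,
      Real.rpow_add h0', Real.rpow_natCast,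
      show (-(1/2) : ℝ) = -(1/2) by rfl, Real.rpow_neg hx1.le]
    ring
  · have : ((1:ℂ) - 1) ^ ((1/2:ℂ) - 1) = 0 := by
      rw [sub_self, Complex.zero_cpow (by norm_num)]
    rw [show ((1:ℝ):ℂ) = (1:ℂ) by norm_num] at *
    rw [this]
    simp

lemma hre_pos (k : ℕ) : 0 < ((k:ℂ) + 1/2).re := by
  simp only [Complex.add_re, Complex.natCast_re, Complex.div_re]
  norm_num
  positivity

lemma J_integrable (k : ℕ) (hk : 1 ≤ k) :
    IntervalIntegrable (fun t : ℝ => t ^ (k - 1) * Real.sqrt (t / (1 - t)))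
      MeasureTheory.volume 0 1 := by
  have hc := Complex.betaIntegral_convergent (u := (k:ℂ) + 1/2) (v := 1/2) (hre_pos k)
    (by norm_num)
  have h2 : IntervalIntegrable
      (fun t : ℝ => ((t ^ (k-1) * Real.sqrt (t/(1-t)) : ℝ) : ℂ)) volume 0 1 :=
    hc.congr (fun x hx =>
      key_eq k hk x (Set.uIoc_subset_uIcc hx))
  refine ⟨?_, ?_⟩
  · have h := h2.1.re; simp only [RCLike.re_to_complex, Complex.ofReal_re] at h; exact h
  · have h := h2.2.re; simp only [RCLike.re_to_complex, Complex.ofReal_re] at h; exact h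

lemma J_eq (k : ℕ) (hk : 1 ≤ k) :
    ∫ t in (0:ℝ)..1, t ^ (k - 1) * Real.sqrt (t / (1 - t)) =
      π * (Nat.choose (2 * k) k : ℝ) / 4 ^ k := by
  set J := ∫ t in (0:ℝ)..1, t ^ (k - 1) * Real.sqrt (t / (1 - t)) with hJ
  have hB : Complex.betaIntegral ((k:ℂ) + 1/2) (1/2) = ((J : ℝ) : ℂ) := by
    rw [hJ, Complex.betaIntegral, ← intervalIntegral.integral_ofReal]
    exact intervalIntegral.integral_congr fun x hx => key_eq k hk x hx
  have hbeta := Complex.Gamma_mul_Gamma_eq_betaIntegral (s := (k:ℂ) + 1/2) (t := 1/2)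
    (hre_pos k) (by norm_num)
  rw [hB] at hbeta
  have e1 : ((k:ℂ) + 1/2) = (((k:ℝ) + 1/2 : ℝ) : ℂ) := by push_cast; ring
  have e2 : ((1/2 : ℂ)) = (((1/2 : ℝ)) : ℂ) := by norm_num
  have e3 : ((k:ℂ) + 1/2 + 1/2) = (((k:ℝ) + 1 : ℝ) : ℂ) := by push_cast; ring
  rw [e3, e1, e2, Complex.Gamma_ofReal, Complex.Gamma_ofReal, Complex.Gamma_ofReal,
    ← Complex.ofReal_mul, ← Complex.ofReal_mul] at hbeta
  have hreal : Real.Gamma ((k:ℝ) + 1/2) * Real.Gamma (1/2) = Real.Gamma ((k:ℝ) + 1) * J :=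
    Complex.ofReal_inj.mp hbeta
  rw [gamma_half, Real.Gamma_one_half_eq, Real.Gamma_nat_eq_factorial] at hreal
  have hC : ((Nat.choose (2*k) k) : ℝ) * (Nat.factorial k : ℝ) * (Nat.factorial k : ℝ)
      = (Nat.factorial (2*k) : ℝ) := by
    have := Nat.choose_mul_factorial_mul_factorial (show k ≤ 2*k by omega)
    rw [show 2*k - k = k by omega] at this
    exact_mod_cast this
  have hπ : Real.sqrt π * Real.sqrt π = π := Real.mul_self_sqrt pi_pos.le
  have hF : (Nat.factorial k : ℝ) ≠ 0 := Nat.cast_ne_zero.mpr (Nat.factorial_ne_zero k)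
  have h4 : ((4:ℝ)) ^ k ≠ 0 := by positivity
  field_simp at hreal
  have h5 : π * ((Nat.factorial (2*k)) : ℝ)
      = (Nat.factorial k : ℝ) * J * (4 ^ k * (Nat.factorial k : ℝ)) := by
    linear_combination hreal - ((Nat.factorial (2*k)) : ℝ) * hπ
  rw [eq_div_iff h4]
  apply mul_right_cancel₀ (mul_ne_zero hF hF)
  linear_combination (-1 : ℝ) * h5 - π * hC

theorem stmt_6 (m : ℕ) (hm : 1 ≤ m) (q : ℕ → ℝ) (hqm : 0 < q m)
    (n : ℕ) (β : ℝ) (hβ : 0 < β)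
    (hint : 2 * π * n = ∫ x in (0:ℝ)..β,
      (∑ k ∈ Finset.Icc 1 m, (k : ℝ) * q k * x ^ (k - 1)) * Real.sqrt (x / (β - x))) :
    8 * (n : ℝ) = 2 * q 1 * β +
      4 * ∑ k ∈ Finset.Icc 2 m, (k : ℝ) * (Nat.choose (2 * k) k : ℝ) * q k * (β / 4) ^ k := by
  have hβ0 : β ≠ 0 := hβ.ne'
  -- scaling x = β t
  have hscale : (∫ x in (0:ℝ)..β,
      (∑ k ∈ Finset.Icc 1 m, (k : ℝ) * q k * x ^ (k - 1)) * Real.sqrt (x / (β - x)))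
      = β • ∫ t in (0:ℝ)..1,
        (∑ k ∈ Finset.Icc 1 m, (k : ℝ) * q k * (β * t) ^ (k - 1)) *
          Real.sqrt ((β * t) / (β - β * t)) := by
    rw [intervalIntegral.smul_integral_comp_mul_left
      (fun x => (∑ k ∈ Finset.Icc 1 m, (k : ℝ) * q k * x ^ (k - 1)) *
        Real.sqrt (x / (β - x))) β, mul_zero, mul_one]
  rw [hscale] at hint
  -- rewrite integrand as a sum
  have hfun : (fun t : ℝ => (∑ k ∈ Finset.Icc 1 m, (k : ℝ) * q k * (β * t) ^ (k - 1)) *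
        Real.sqrt ((β * t) / (β - β * t)))
      = fun t : ℝ => ∑ k ∈ Finset.Icc 1 m,
          ((k : ℝ) * q k * β ^ (k - 1)) * (t ^ (k - 1) * Real.sqrt (t / (1 - t))) := by
    funext t
    have hdiv : β * t / (β - β * t) = t / (1 - t) := by
      rw [show β - β * t = β * (1 - t) by ring, mul_div_mul_left _ _ hβ0]
    rw [hdiv, Finset.sum_mul]
    refine Finset.sum_congr rfl fun k _ => ?_
    rw [mul_pow]
    ring
  rw [hfun, intervalIntegral.integral_finset_sum (fun k hk =>
    ((J_integrable k (Finset.mem_Icc.mp hk).1).const_mul _))] at hint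
  simp_rw [intervalIntegral.integral_const_mul] at hint
  have hsum : ∑ k ∈ Finset.Icc 1 m, ((k : ℝ) * q k * β ^ (k - 1)) *
        ∫ t in (0:ℝ)..1, t ^ (k - 1) * Real.sqrt (t / (1 - t))
      = ∑ k ∈ Finset.Icc 1 m, (k : ℝ) * q k * β ^ (k - 1) * (π * (Nat.choose (2*k) k : ℝ) / 4 ^ k) :=
    Finset.sum_congr rfl fun k hk => by rw [J_eq k (Finset.mem_Icc.mp hk).1]
  rw [hsum, smul_eq_mul, Finset.mul_sum] at hint
  have hterm : ∀ k ∈ Finset.Icc 1 m,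
      β * ((k : ℝ) * q k * β ^ (k - 1) * (π * (Nat.choose (2*k) k : ℝ) / 4 ^ k))
      = π * ((k : ℝ) * (Nat.choose (2*k) k : ℝ) * q k * (β / 4) ^ k) := by
    intro k hk
    have hk1 := (Finset.mem_Icc.mp hk).1
    have hb : β ^ k = β * β ^ (k - 1) := by
      rw [← pow_succ']; congr 1; omega
    rw [div_pow, hb]
    have h4 : ((4:ℝ)) ^ k ≠ 0 := by positivity
    field_simp
  rw [Finset.sum_congr rfl hterm, ← Finset.mul_sum] at hint
  have h2n : 2 * (n:ℝ) = ∑ k ∈ Finset.Icc 1 m,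
      (k : ℝ) * (Nat.choose (2*k) k : ℝ) * q k * (β / 4) ^ k := by
    apply mul_left_cancel₀ Real.pi_ne_zero
    linear_combination hint
  have hsplit : Finset.Icc 1 m = insert 1 (Finset.Icc 2 m) := by
    ext x; simp only [Finset.mem_Icc, Finset.mem_insert]; omega
  rw [hsplit, Finset.sum_insert (by simp)] at h2n
  norm_num [Nat.choose] at h2n
  linarith [h2n]
end

section
/- For every positive integer m, (4/(2m−1)) · ₂F₁(1, 1−m; 3/2−m; z) = (2/(m A_m)) ∑_{k=0}^{m−1} A_{m−1−k} z^k as polynomials in z, where A_j = 4^{-j}(2j choose j) (with A_0 = 1). -/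
/-- The Pochhammer symbol (rising factorial) for a real argument. -/
noncomputable def poch (a : ℝ) (j : ℕ) : ℝ := ∏ i ∈ Finset.range j, (a + i)

/-- The coefficients `A_j = 4^{-j} (2j choose j)`. -/
noncomputable def Acoef (j : ℕ) : ℝ := (4 : ℝ) ^ (-(j : ℤ)) * (Nat.choose (2 * j) j : ℝ)

lemma poch_succ (a : ℝ) (j : ℕ) : poch a (j+1) = poch a j * (a + j) := by
  simp [poch, Finset.prod_range_succ]

lemma Acoef_pos (j : ℕ) : 0 < Acoef j := by
  apply mul_pos
  · positivity
  · exact_mod_cast Nat.choose_pos (by omega)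

lemma Arec (n : ℕ) : (2*(n:ℝ)+2) * Acoef (n+1) = (2*(n:ℝ)+1) * Acoef n := by
  have h := Nat.succ_mul_centralBinom_succ n
  simp only [Nat.centralBinom] at h
  have h' : ((n:ℝ)+1) * (Nat.choose (2*(n+1)) (n+1) : ℝ)
      = 2*(2*(n:ℝ)+1) * (Nat.choose (2*n) n : ℝ) := by exact_mod_cast h
  have hz : (4:ℝ) ^ (-((n+1:ℕ) : ℤ)) = (4:ℝ) ^ (-(n:ℤ)) / 4 := by
    have e : (-((n+1:ℕ)) : ℤ) = -(n:ℤ) + (-1) := by push_cast; ring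
    rw [e, zpow_add₀ (by norm_num : (4:ℝ) ≠ 0)]
    norm_num
    ring
  simp only [Acoef]
  rw [hz]
  linear_combination ((4:ℝ)^(-(n:ℤ)) / 2) * h'

lemma poch_half_ne (m j : ℕ) : poch (3/2 - (m:ℝ)) j ≠ 0 := by
  induction j with
  | zero => simp [poch]
  | succ n ih =>
    rw [poch_succ]
    refine mul_ne_zero ih fun h => ?_
    have h1 : (2*m : ℝ) = 2*n + 3 := by linarith
    have h2 : (2*m : ℤ) = 2*n + 3 := by exact_mod_cast h1
    omega

lemma frac_helper (A B C F a b c d s : ℝ) (hC : C ≠ 0) (hF : F ≠ 0) (hc : c ≠ 0)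
    (hd : d ≠ 0) (hs : a*b/(c*d) = s) :
    A*a*(B*b)/(C*c*(d*F)) = A*B/(C*F)*s := by
  subst hs
  field_simp

lemma key (m : ℕ) (hm : 0 < m) : ∀ j, j < m →
    4/(2*(m:ℝ)-1) * (poch 1 j * poch (1-(m:ℝ)) j /
      (poch (3/2-(m:ℝ)) j * (Nat.factorial j : ℝ)))
    = 2/((m:ℝ) * Acoef m) * Acoef (m-1-j) := by
  intro j
  induction j with
  | zero =>
    intro _
    obtain ⟨n, rfl⟩ : ∃ n, m = n+1 := ⟨m-1, by omega⟩
    have h := Arec n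
    have hA := Acoef_pos n
    have hA1 := Acoef_pos (n+1)
    simp only [poch, Finset.range_zero, Finset.prod_empty, Nat.factorial_zero, Nat.cast_one,
      mul_one, one_mul, Nat.add_sub_cancel, Nat.sub_zero]
    have hne : (2*((n:ℝ)+1)-1) ≠ 0 := by nlinarith [n.cast_nonneg (α := ℝ)]
    have hne2 : ((n:ℝ)+1) * Acoef (n+1) ≠ 0 := by positivity
    push_cast
    field_simp
    nlinarith [h]
  | succ j ih =>
    intro hj
    have old := ih (by omega)
    have h2 : m - 1 - j = (m - 2 - j) + 1 := by omega
    set t := m - 2 - j with ht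
    have hm2 : (m:ℝ) = (j:ℝ) + t + 2 := by
      have e : m = j + t + 2 := by omega
      rw [e]; push_cast; ring
    have h1 : m - 1 - (j+1) = t := by omega
    rw [h2] at old
    rw [h1, poch_succ, poch_succ, poch_succ]
    have hAr := Arec t
    have hp := poch_half_ne m j
    have hfac : (Nat.factorial j : ℝ) ≠ 0 := by
      exact_mod_cast (Nat.factorial_ne_zero j)
    have hd1 : (3/2 - (m:ℝ) + j) = -(t:ℝ) - 1/2 := by rw [hm2]; ring
    have hd2 : (1 - (m:ℝ) + j) = -(t:ℝ) - 1 := by rw [hm2]; ring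
    have hcne : (-(t:ℝ) - 1/2) ≠ 0 := by nlinarith [t.cast_nonneg (α := ℝ)]
    have htne : (2*(t:ℝ)+1) ≠ 0 := by nlinarith [t.cast_nonneg (α := ℝ)]
    have hjne : ((j:ℝ)+1) ≠ 0 := by nlinarith [j.cast_nonneg (α := ℝ)]
    have hscal : (1+(j:ℝ))*(-(t:ℝ)-1) / ((-(t:ℝ)-1/2)*((j:ℝ)+1)) = (2*(t:ℝ)+2)/(2*(t:ℝ)+1) := by
      rw [div_eq_div_iff (mul_ne_zero hcne hjne) htne]
      ring
    have hAc : Acoef t = (2*(t:ℝ)+2)/(2*(t:ℝ)+1) * Acoef (t+1) := by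
      field_simp
      linarith [hAr]
    rw [Nat.factorial_succ]
    push_cast
    rw [hd1, hd2]
    rw [frac_helper (poch 1 j) (poch (1-(m:ℝ)) j) (poch (3/2-(m:ℝ)) j) (Nat.factorial j : ℝ)
      (1+(j:ℝ)) (-(t:ℝ)-1) (-(t:ℝ)-1/2) ((j:ℝ)+1) ((2*(t:ℝ)+2)/(2*(t:ℝ)+1))
      hp hfac hcne hjne hscal]
    linear_combination ((2*(t:ℝ)+2)/(2*(t:ℝ)+1)) * old - (2/((m:ℝ)*Acoef m)) * hAc

theorem stmt_9 (m : ℕ) (hm : 0 < m) (z : ℝ) :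
    (4 / (2 * (m : ℝ) - 1)) *
      ∑ j ∈ Finset.range m,
        poch 1 j * poch (1 - (m : ℝ)) j / (poch (3/2 - (m : ℝ)) j * (Nat.factorial j : ℝ)) * z ^ j =
    (2 / ((m : ℝ) * Acoef m)) * ∑ k ∈ Finset.range m, Acoef (m - 1 - k) * z ^ k := by
  rw [Finset.mul_sum, Finset.mul_sum]
  refine Finset.sum_congr rfl fun j hj => ?_
  rw [Finset.mem_range] at hj
  rw [← mul_assoc, ← mul_assoc, key m hm j hj]
end

section
/- For β > 0, ∫₀^β e^x √(x/(β−x)) dx = (πβ/2) e^{β/2} [I₀(β/2) + I₁(β/2)], where I₀ and I₁ are modified Bessel functions of the first kind. -/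
open Real

/-- The modified Bessel function of the first kind of nonnegative integer order. -/
noncomputable def besselI (ν : ℕ) (z : ℝ) : ℝ :=
  ∑' k : ℕ, (z / 2) ^ (ν + 2 * k) / ((Nat.factorial k : ℝ) * (Nat.factorial (ν + k) : ℝ))

open MeasureTheory Set

-- Wallis integrals over [0, π]
lemma W_odd (k : ℕ) : ∫ x in (0:ℝ)..π, cos x ^ (2*k+1) = 0 := by
  have h := intervalIntegral.integral_comp_sub_left (a := (0:ℝ)) (b := π)
    (fun x => cos x ^ (2*k+1)) π
  simp only [sub_self, sub_zero] at h
  have h2 : (∫ x in (0:ℝ)..π, cos (π - x) ^ (2*k+1))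
      = - ∫ x in (0:ℝ)..π, cos x ^ (2*k+1) := by
    rw [← intervalIntegral.integral_neg]
    congr 1
    ext x
    rw [Real.cos_pi_sub]
    exact Odd.neg_pow ⟨k, by ring⟩ _
  linarith [h.symm.trans h2]

lemma W_even (k : ℕ) : ∫ x in (0:ℝ)..π, cos x ^ (2*k) = π * ((2*k).choose k) / 4^k := by
  induction k with
  | zero => simp
  | succ n ih =>
    have h := integral_cos_pow (a := (0:ℝ)) (b := π) (2*n)
    rw [Real.sin_pi, Real.sin_zero] at h
    have h2 : 2 * (n+1) = 2*n + 2 := by ring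
    rw [h2, h, ih]
    have hc : ((n:ℝ) + 1) * ((2*(n+1)).choose (n+1) : ℝ)
        = 2 * (2*(n:ℝ) + 1) * ((2*n).choose n : ℝ) := by
      have := Nat.succ_mul_centralBinom_succ n
      rw [Nat.centralBinom, Nat.centralBinom] at this
      exact_mod_cast congrArg (Nat.cast : ℕ → ℝ) this
    have h4 : (4:ℝ)^(n+1) ≠ 0 := by positivity
    have h4' : (4:ℝ)^n ≠ 0 := by positivity
    have hn2 : (2*(n:ℝ) + 2) ≠ 0 := by positivity
    rw [show 2*(n+1) = 2*n+2 from by ring] at hc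
    push_cast at hc ⊢
    field_simp
    linear_combination (-(2:ℝ)*π*4^n) * hc

lemma exp_tsum (x : ℝ) : Real.exp x = ∑' n : ℕ, x ^ n / n.factorial := by
  rw [Real.exp_eq_exp_ℝ, NormedSpace.exp_eq_tsum_div]

lemma key_swap (c : ℝ) (hc : 0 ≤ c) (ν : ℕ) :
    ∫ θ in (0:ℝ)..π, Real.exp (c * Real.cos θ) * Real.cos θ ^ ν
      = ∑' n : ℕ, (c ^ n / n.factorial) * ∫ θ in (0:ℝ)..π, Real.cos θ ^ (n + ν) := by
  have hπ : (0:ℝ) ≤ π := Real.pi_pos.le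
  set F : ℕ → ℝ → ℝ := fun n θ => c ^ n / n.factorial * Real.cos θ ^ (n + ν) with hF
  have hcont : ∀ n, Continuous (F n) := by
    intro n; fun_prop
  have hint : ∀ n, Integrable (F n) (volume.restrict (Ioc (0:ℝ) π)) := by
    intro n
    exact ((hcont n).integrableOn_Ioc)
  have hbound : ∀ n, (∫ θ in Ioc (0:ℝ) π, ‖F n θ‖) ≤ π * (c ^ n / n.factorial) := by
    intro n
    have h1 : ∀ θ ∈ Ioc (0:ℝ) π, ‖F n θ‖ ≤ c ^ n / n.factorial := by
      intro θ _
      rw [hF]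
      simp only [norm_mul, norm_div, norm_pow, Real.norm_eq_abs]
      have h2 : |Real.cos θ| ^ (n + ν) ≤ 1 :=
        pow_le_one₀ (abs_nonneg _) (Real.abs_cos_le_one θ)
      have h3 : |c| ^ n / |(n.factorial : ℝ)| = c ^ n / n.factorial := by
        rw [abs_of_nonneg hc, abs_of_nonneg (by positivity)]
      calc |c| ^ n / |(n.factorial : ℝ)| * |Real.cos θ| ^ (n + ν)
          ≤ |c| ^ n / |(n.factorial : ℝ)| * 1 := by
            apply mul_le_mul_of_nonneg_left h2 (by positivity)
        _ = c ^ n / n.factorial := by rw [mul_one, h3]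
    calc (∫ θ in Ioc (0:ℝ) π, ‖F n θ‖)
        ≤ ∫ _ in Ioc (0:ℝ) π, (c ^ n / n.factorial) :=
          setIntegral_mono_on (hint n).norm (integrableOn_const (by
            simp [Real.volume_Ioc])) measurableSet_Ioc h1
      _ = π * (c ^ n / n.factorial) := by
          simp [Real.volume_Ioc, ENNReal.toReal_ofReal hπ, hπ]
  have hsum : Summable fun n => ∫ θ in Ioc (0:ℝ) π, ‖F n θ‖ := by
    apply Summable.of_nonneg_of_le (fun n => integral_nonneg (fun θ => norm_nonneg _)) hbound
    exact (Real.summable_pow_div_factorial c).mul_left π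
  have hswap := MeasureTheory.integral_tsum_of_summable_integral_norm hint hsum
  have hptws : ∀ θ : ℝ, Real.exp (c * Real.cos θ) * Real.cos θ ^ ν = ∑' n, F n θ := by
    intro θ
    rw [exp_tsum]
    rw [← tsum_mul_right]
    congr 1; ext n
    rw [hF]
    simp only [mul_pow, pow_add]
    ring
  rw [intervalIntegral.integral_of_le hπ]
  calc ∫ θ in Ioc (0:ℝ) π, Real.exp (c * Real.cos θ) * Real.cos θ ^ ν
      = ∫ θ in Ioc (0:ℝ) π, ∑' n, F n θ := by
        apply setIntegral_congr_fun measurableSet_Ioc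
        intro θ _; exact hptws θ
    _ = ∑' n, ∫ θ in Ioc (0:ℝ) π, F n θ := hswap.symm
    _ = ∑' n : ℕ, (c ^ n / n.factorial) * ∫ θ in (0:ℝ)..π, Real.cos θ ^ (n + ν) := by
        congr 1; ext n
        simp only [hF]
        rw [MeasureTheory.integral_const_mul, intervalIntegral.integral_of_le hπ]

lemma summable_bessel (ν : ℕ) (c : ℝ) (hc : 0 ≤ c) :
    Summable (fun k : ℕ => (c/2) ^ (ν + 2*k) / ((k.factorial : ℝ) * (ν+k).factorial)) := by
  refine Summable.of_nonneg_of_le (fun k => by positivity) (fun k => ?_)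
    ((Real.summable_pow_div_factorial ((c/2)^2)).mul_left ((c/2)^ν))
  have hk : (0:ℝ) < k.factorial := by positivity
  have h1 : (1:ℝ) ≤ ((ν+k).factorial : ℝ) := by exact_mod_cast (ν+k).factorial_pos
  have h2 : (k.factorial : ℝ) ≤ (k.factorial : ℝ) * (ν+k).factorial := by nlinarith
  calc (c/2) ^ (ν + 2*k) / ((k.factorial : ℝ) * (ν+k).factorial)
      ≤ (c/2) ^ (ν + 2*k) / (k.factorial : ℝ) :=
        div_le_div_of_nonneg_left (by positivity) hk h2
    _ = (c/2)^ν * (((c/2)^2)^k / k.factorial) := by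
        rw [pow_add, pow_mul, mul_div_assoc]

lemma sum0 (c : ℝ) (hc : 0 ≤ c) :
    ∑' n : ℕ, (c ^ n / n.factorial) * ∫ θ in (0:ℝ)..π, Real.cos θ ^ (n + 0)
      = π * besselI 0 c := by
  set a : ℕ → ℝ := fun n => (c ^ n / n.factorial) * ∫ θ in (0:ℝ)..π, Real.cos θ ^ (n + 0)
    with ha
  have ha_even : ∀ k, a (2*k) = π * ((c/2) ^ (0 + 2*k) / ((k.factorial : ℝ) * (0+k).factorial)) := by
    intro k
    rw [ha]
    simp only [add_zero, zero_add, zero_add]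
    rw [W_even k]
    have hcc : (((2*k).choose k : ℝ)) * k.factorial * k.factorial = (2*k).factorial := by
      have := Nat.choose_mul_factorial_mul_factorial (show k ≤ 2*k by omega)
      rw [show 2*k - k = k by omega] at this
      exact_mod_cast this
    rw [div_pow, show ((2:ℝ))^(2*k) = 4^k by rw [pow_mul]; norm_num]
    have hf2k : ((2*k).factorial : ℝ) ≠ 0 := by positivity
    have hfk : ((k.factorial : ℝ)) ≠ 0 := by positivity
    have h4 : ((4:ℝ))^k ≠ 0 := by positivity
    field_simp
    linear_combination c^(2*k) * hcc
  have ha_odd : ∀ k, a (2*k+1) = 0 := by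
    intro k
    rw [ha]
    simp only [add_zero]
    rw [W_odd k, mul_zero]
  have hse : Summable (fun k => a (2*k)) := by
    rw [funext ha_even]
    exact ((summable_bessel 0 c hc).mul_left π)
  have hso : Summable (fun k => a (2*k+1)) := by
    rw [funext ha_odd]; exact summable_zero
  rw [← tsum_even_add_odd hse hso, funext ha_odd, tsum_zero, add_zero, funext ha_even,
    tsum_mul_left, besselI]

lemma sum1 (c : ℝ) (hc : 0 ≤ c) :
    ∑' n : ℕ, (c ^ n / n.factorial) * ∫ θ in (0:ℝ)..π, Real.cos θ ^ (n + 1)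
      = π * besselI 1 c := by
  set a : ℕ → ℝ := fun n => (c ^ n / n.factorial) * ∫ θ in (0:ℝ)..π, Real.cos θ ^ (n + 1)
    with ha
  have ha_odd : ∀ k, a (2*k+1) = π * ((c/2) ^ (1 + 2*k) / ((k.factorial : ℝ) * (1+k).factorial)) := by
    intro k
    rw [ha]
    simp only []
    rw [show 2*k+1+1 = 2*(k+1) by ring, W_even (k+1)]
    have hcc : (((2*(k+1)).choose (k+1) : ℝ)) * (k+1).factorial * (k+1).factorial
        = (2*(k+1)).factorial := by
      have := Nat.choose_mul_factorial_mul_factorial (show k+1 ≤ 2*(k+1) by omega)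
      rw [show 2*(k+1) - (k+1) = k+1 by omega] at this
      exact_mod_cast this
    have hf1 : ((2*(k+1)).factorial : ℝ) = (2*k+2) * (2*k+1).factorial := by
      rw [show 2*(k+1) = (2*k+1)+1 by ring, Nat.factorial_succ]
      push_cast; ring
    have hf2 : ((k+1).factorial : ℝ) = (k+1) * k.factorial := by
      rw [Nat.factorial_succ]; push_cast; ring
    have hf3 : ((1+k).factorial : ℝ) = (k+1) * k.factorial := by
      rw [show 1+k = k+1 by ring]; exact hf2
    rw [div_pow, show ((2:ℝ))^(1+2*k) = 2 * 4^k by rw [pow_add, pow_mul]; norm_num]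
    have hfo : ((2*k+1).factorial : ℝ) ≠ 0 := by positivity
    have hfk : ((k.factorial : ℝ)) ≠ 0 := by positivity
    have h4 : ((4:ℝ))^k ≠ 0 := by positivity
    have hC : ((2*(k+1)).choose (k+1) : ℝ) * (((k:ℝ)+1) * k.factorial) * (((k:ℝ)+1) * k.factorial)
        = (2*(k:ℝ)+2) * (2*k+1).factorial := by
      rw [← hf2, ← hf1]; exact hcc
    -- hC kept in 2*(k+1) form
    rw [hf3]
    push_cast
    have hk1 : ((k:ℝ)+1) ≠ 0 := by positivity
    have hC2 : ((2*(k+1)).choose (k+1):ℝ) * k.factorial * k.factorial * ((k:ℝ)+1)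
        = 2 * (2*k+1).factorial :=
      mul_left_cancel₀ hk1 (by linear_combination hC)
    field_simp
    linear_combination (2*c^(2*k+1)*4^k) * hC2
  have ha_even : ∀ k, a (2*k) = 0 := by
    intro k
    rw [ha]
    simp only []
    rw [show 2*k+1 = 2*k+1 from rfl, W_odd k, mul_zero]
  have hso : Summable (fun k => a (2*k+1)) := by
    rw [funext ha_odd]
    exact ((summable_bessel 1 c hc).mul_left π)
  have hse : Summable (fun k => a (2*k)) := by
    rw [funext ha_even]; exact summable_zero
  rw [← tsum_even_add_odd hse hso, funext ha_even, tsum_zero, zero_add, funext ha_odd,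
    tsum_mul_left, besselI]

lemma cov (β : ℝ) (hβ : 0 < β) :
    ∫ x in (0:ℝ)..β, Real.exp x * Real.sqrt (x / (β - x))
      = ∫ θ in (0:ℝ)..π, (β/2) * Real.exp ((β/2)*(1 - Real.cos θ)) * (1 - Real.cos θ) := by
  set φ : ℝ → ℝ := fun θ => β/2 * (1 - Real.cos θ) with hφ
  set g : ℝ → ℝ := fun x => Real.exp x * Real.sqrt (x / (β - x)) with hg
  have himg : φ '' Ioo 0 π = Ioo 0 β := by
    ext x
    simp only [mem_image, mem_Ioo]
    constructor
    · rintro ⟨θ, ⟨h0, hπ⟩, rfl⟩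
      have hc1 : Real.cos θ < 1 := by
        have := Real.cos_lt_cos_of_nonneg_of_le_pi le_rfl hπ.le h0
        simpa using this
      have hc2 : -1 < Real.cos θ := by
        have := Real.cos_lt_cos_of_nonneg_of_le_pi h0.le le_rfl hπ
        simpa using this
      simp only [hφ]
      constructor
      · nlinarith
      · nlinarith
    · rintro ⟨hx0, hxβ⟩
      have hy1 : (1 - 2*x/β) < 1 := by
        have h : 0 < 2*x/β := by positivity
        linarith
      have hy2 : -1 < 1 - 2*x/β := by
        have h : x/β < 1 := (div_lt_one hβ).2 hxβ
        have h2 : 2*x/β = 2*(x/β) := by ring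
        linarith
      refine ⟨Real.arccos (1 - 2*x/β), ⟨Real.arccos_pos.2 hy1, ?_⟩, ?_⟩
      · rw [Real.arccos]
        have := Real.neg_pi_div_two_lt_arcsin.2 hy2
        linarith
      · show β / 2 * (1 - Real.cos (Real.arccos (1 - 2*x/β))) = x
        rw [Real.cos_arccos hy2.le hy1.le]
        field_simp
        ring
  have hderiv : ∀ θ ∈ Ioo (0:ℝ) π, HasDerivWithinAt φ (β/2 * Real.sin θ) (Ioo 0 π) θ := by
    intro θ _
    have h2 := ((Real.hasDerivAt_cos θ).const_sub 1).const_mul (β/2)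
    have h3 : β/2 * -(-Real.sin θ) = β/2 * Real.sin θ := by ring
    rw [h3] at h2
    exact h2.hasDerivWithinAt
  have hinj : InjOn φ (Ioo 0 π) := by
    intro a ha b hb hab
    have hb2 : (β/2) ≠ 0 := by positivity
    have hcab : Real.cos a = Real.cos b := by
      rw [hφ] at hab
      simp only at hab
      have := mul_left_cancel₀ hb2 hab
      linarith
    exact Real.injOn_cos ⟨ha.1.le, ha.2.le⟩ ⟨hb.1.le, hb.2.le⟩ hcab
  have h := MeasureTheory.integral_image_eq_integral_abs_deriv_smul measurableSet_Ioo hderiv hinj g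
  rw [himg] at h
  rw [intervalIntegral.integral_of_le hβ.le, MeasureTheory.integral_Ioc_eq_integral_Ioo, ← hg, h,
    intervalIntegral.integral_of_le Real.pi_pos.le, MeasureTheory.integral_Ioc_eq_integral_Ioo]
  apply setIntegral_congr_fun measurableSet_Ioo
  intro θ hθ
  obtain ⟨h0, hπ⟩ := hθ
  have hs : 0 < Real.sin θ := Real.sin_pos_of_pos_of_lt_pi h0 hπ
  have hc1 : Real.cos θ < 1 := by
    have := Real.cos_lt_cos_of_nonneg_of_le_pi le_rfl hπ.le h0
    simpa using this
  have hc2 : -1 < Real.cos θ := by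
    have := Real.cos_lt_cos_of_nonneg_of_le_pi h0.le le_rfl hπ
    simpa using this
  have h1c : 0 < 1 - Real.cos θ := by linarith
  have h1c' : 0 < 1 + Real.cos θ := by linarith
  have hβφ : β - φ θ = β/2 * (1 + Real.cos θ) := by rw [hφ]; ring
  have hsin2 : Real.sin θ ^ 2 = (1 - Real.cos θ) * (1 + Real.cos θ) := by
    have := Real.sin_sq_add_cos_sq θ; nlinarith
  have hsqrt : Real.sqrt (φ θ / (β - φ θ)) = (1 - Real.cos θ) / Real.sin θ := by
    have hq : φ θ / (β - φ θ) = ((1 - Real.cos θ)/Real.sin θ)^2 := by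
      rw [hβφ, hφ]
      simp only
      rw [div_pow, div_eq_div_iff (by positivity) (by positivity)]
      linear_combination (β/2*(1-Real.cos θ)) * hsin2
    rw [hq, Real.sqrt_sq (by positivity)]
  simp only [hg, smul_eq_mul]
  rw [hsqrt, abs_of_pos (by positivity : (0:ℝ) < β/2 * Real.sin θ)]
  have hφθ : φ θ = β/2 * (1 - Real.cos θ) := by rw [hφ]
  rw [hφθ]
  field_simp

theorem stmt_16 (β : ℝ) (hβ : 0 < β) :
    ∫ x in (0:ℝ)..β, Real.exp x * Real.sqrt (x / (β - x)) =
      (π * β / 2) * Real.exp (β / 2) * (besselI 0 (β / 2) + besselI 1 (β / 2)) := by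
  set c : ℝ := β / 2 with hc
  have hc0 : 0 ≤ c := by positivity
  rw [cov β hβ]
  -- symmetry θ ↦ π - θ
  have hsym := intervalIntegral.integral_comp_sub_left (a := (0:ℝ)) (b := π)
    (fun θ => (β/2) * Real.exp ((β/2)*(1 - Real.cos θ)) * (1 - Real.cos θ)) π
  simp only [sub_self, sub_zero] at hsym
  have hsym2 : (∫ θ in (0:ℝ)..π,
      (β/2) * Real.exp ((β/2)*(1 - Real.cos (π - θ))) * (1 - Real.cos (π - θ)))
      = ∫ θ in (0:ℝ)..π, (β/2) * Real.exp ((β/2)*(1 + Real.cos θ)) * (1 + Real.cos θ) := by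
    apply intervalIntegral.integral_congr
    intro θ _
    simp only [Real.cos_pi_sub]
    ring_nf
  rw [← hsym, hsym2]
  -- split the integrand
  have hintg : ∀ θ : ℝ, (β/2) * Real.exp ((β/2)*(1 + Real.cos θ)) * (1 + Real.cos θ)
      = (β/2) * Real.exp c * (Real.exp (c * Real.cos θ) * Real.cos θ ^ 0)
        + (β/2) * Real.exp c * (Real.exp (c * Real.cos θ) * Real.cos θ ^ 1) := by
    intro θ
    rw [hc, show (β/2)*(1 + Real.cos θ) = β/2 + (β/2) * Real.cos θ by ring, Real.exp_add]
    simp only [pow_zero, pow_one]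
    ring
  rw [intervalIntegral.integral_congr (fun θ _ => hintg θ)]
  rw [intervalIntegral.integral_add
    (by apply Continuous.intervalIntegrable; fun_prop)
    (by apply Continuous.intervalIntegrable; fun_prop)]
  rw [intervalIntegral.integral_const_mul, intervalIntegral.integral_const_mul]
  rw [key_swap c hc0 0, key_swap c hc0 1, sum0 c hc0, sum1 c hc0]
  rw [hc]
  ring
end
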